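/- Let H ≤ K and H ≤ L be groups with K ∩ L = H. Suppose g*₀ g*₁ ⋯ g*_{n−1} and g**₀ g**₁ ⋯ g**_{m−1} are canonical forms representing the same element of K *_H L. Then n = m, and there exist h₀, h₁, …, h_n ∈ H with h₀ = h_n = 1 such that g**_i = h_i⁻¹ g*_i h_{i+1} for every i < n. -/

import Mathlib

open Pointwise

section AmalgamDefs

variable {M : Type*} [Group M]

/-- A list `l` of elements of `M` is a canonical form with respect to the subgroups `K`, `L`
(with `H = K ⊓ L`): either it has length one and its entry lies in `K ∪ L`, or it has length
`> 1`, all entries lie in `(K ∪ L) ∖ H`, and consecutive entries alternate between `K` and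
`L`. -/
def IsCanonicalForm (K L : Subgroup M) (l : List M) : Prop :=
  (∀ x ∈ l, x ∈ (K : Set M) ∪ (L : Set M)) ∧
    (l.length = 1 ∨
      (1 < l.length ∧ (∀ x ∈ l, x ∉ K ⊓ L) ∧
        ∀ i : ℕ, i + 1 < l.length → (l.getD i 1 ∈ K ↔ l.getD (i + 1) 1 ∈ L)))

/-- `M` is the free product of its subgroups `K` and `L` amalgamated over `H = K ⊓ L`:
`K` and `L` generate `M`, and no alternating word of length at least two in elements of
`(K ∖ H) ∪ (L ∖ H)` represents the identity. -/
def IsAmalgam (K L : Subgroup M) : Prop :=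
  K ⊔ L = ⊤ ∧ ∀ l : List M, IsCanonicalForm K L l → 2 ≤ l.length → l.prod ≠ 1

/-- `g` and `g'` are good fellows over `H` if `g ∉ H g' H` and `g ∉ H g'⁻¹ H`. -/
def GoodFellows (H : Subgroup M) (g g' : M) : Prop :=
  (∀ h₁ ∈ H, ∀ h₂ ∈ H, g ≠ h₁ * g' * h₂) ∧ ∀ h₁ ∈ H, ∀ h₂ ∈ H, g ≠ h₁ * g'⁻¹ * h₂

/-- `H` is a malnormal subgroup of `L` (both being subgroups of an ambient group). -/
def MalnormalIn (H L : Subgroup M) : Prop :=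
  ∀ h ∈ H, h ≠ 1 → ∀ g ∈ L, g ∉ H → g⁻¹ * h * g ∉ H

/-- `H` is a malnormal subgroup of the whole group. -/
def Malnormal (H : Subgroup M) : Prop :=
  ∀ h ∈ H, h ≠ 1 → ∀ g : M, g ∉ H → g⁻¹ * h * g ∉ H

/-- A weakly cyclically reduced canonical form: length one, or even length, or the product of
the last and the first entries is not in `H = K ⊓ L`. -/
def IsWCRForm (K L : Subgroup M) (l : List M) : Prop :=
  IsCanonicalForm K L l ∧
    (l.length = 1 ∨ Even l.length ∨ ∀ h : l ≠ [], l.getLast h * l.head h ∉ K ⊓ L)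

/-- `R` is symmetrized: closed under inverses and under weakly cyclically reduced
conjugates. -/
def Symmetrized (K L : Subgroup M) (R : Set M) : Prop :=
  (∀ g ∈ R, g⁻¹ ∈ R) ∧
    ∀ g ∈ R, ∀ x : M, ∀ l : List M, IsWCRForm K L l → l.prod = x * g * x⁻¹ → x * g * x⁻¹ ∈ R

/-- The symmetrized closure of a set: the smallest symmetrized set containing it. -/
def SymmClosure (K L : Subgroup M) (B : Set M) : Set M :=
  ⋂₀ {R : Set M | Symmetrized K L R ∧ B ⊆ R}

/-- The small cancellation condition `C'(χ)` for a subset `X` of the amalgam: if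
`g*_{n-1} ⋯ g*_0` and `g**_0 ⋯ g**_{m-1}` are canonical forms of elements of `X` whose
product is not `1`, and the length-`ℓ` tail of the first cancels with the length-`ℓ`
head of the second into `H = K ⊓ L` (with `ℓ < n, m`), then `ℓ < min(n,m)·χ`. -/
def SmallCancellation (K L : Subgroup M) (χ : ℝ) (X : Set M) : Prop :=
  ∀ a b : List M, IsCanonicalForm K L a → IsCanonicalForm K L b →
    a.prod ∈ X → b.prod ∈ X → a.prod * b.prod ≠ 1 →
    ∀ ℓ : ℕ, ℓ < a.length → ℓ < b.length →
      (a.drop (a.length - ℓ)).prod * (b.take ℓ).prod ∈ K ⊓ L →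
      (ℓ : ℝ) < (min a.length b.length : ℕ) * χ

/-- The word `w` (a canonical form) is a part of the group element `g`: it occurs as a
consecutive subword of a canonical representation of some weakly cyclically reduced
conjugate of `g`. -/
def IsPart (K L : Subgroup M) (w : List M) (g : M) : Prop :=
  IsCanonicalForm K L w ∧
    ∃ (x : M) (v : List M), IsWCRForm K L v ∧ v.prod = x * g * x⁻¹ ∧ w <:+: v

/-- The word `ρ(x,y) = x y x² y x³ y ⋯ x⁸⁰ y` (of length `3320`). -/
def rhoWord (x y : M) : M :=
  ((List.range 80).map fun k => x ^ (k + 1) * y).prod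

/-- The canonical projection onto the quotient by the normal closure of `R`. -/
def amalgProj (R : Set M) : M →* M ⧸ Subgroup.normalClosure R :=
  QuotientGroup.mk' _

end AmalgamDefs

namespace CFUaux

variable {M : Type*} [Group M]

def Rel (K L : Subgroup M) (a b : M) : Prop := (a ∈ K ↔ b ∈ L) ∧ (a ∈ L ↔ b ∈ K)

def AltW (K L : Subgroup M) (l : List M) : Prop :=
  (∀ x ∈ l, (x ∈ K ∧ x ∉ L) ∨ (x ∈ L ∧ x ∉ K)) ∧ l.Chain' (Rel K L)

theorem Rel.swap {K L : Subgroup M} {a b : M} (h : Rel K L a b) : Rel L K a b := ⟨h.2, h.1⟩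

theorem AltW.swap {K L : Subgroup M} {l : List M} (h : AltW K L l) : AltW L K l :=
  ⟨fun x hx => (h.1 x hx).symm, h.2.imp fun _ _ hr => hr.swap⟩

theorem AltW.tail {K L : Subgroup M} {x : M} {l : List M} (h : AltW K L (x :: l)) :
    AltW K L l :=
  ⟨fun y hy => h.1 y (List.mem_cons_of_mem _ hy), h.2.tail⟩

theorem AltW.cons' {K L : Subgroup M} {x : M} {l : List M}
    (hx : (x ∈ K ∧ x ∉ L) ∨ (x ∈ L ∧ x ∉ K)) (hl : AltW K L l)
    (hr : ∀ y ∈ l.head?, Rel K L x y) : AltW K L (x :: l) := by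
  refine ⟨fun y hy => ?_, List.isChain_cons.mpr ⟨hr, hl.2⟩⟩
  rcases List.mem_cons.mp hy with rfl | hy
  · exact hx
  · exact hl.1 y hy

theorem AltW.append {K L : Subgroup M} {l₁ l₂ : List M} (h₁ : AltW K L l₁) (h₂ : AltW K L l₂)
    (hr : ∀ x ∈ l₁.getLast?, ∀ y ∈ l₂.head?, Rel K L x y) : AltW K L (l₁ ++ l₂) := by
  refine ⟨fun y hy => ?_, List.isChain_append.mpr ⟨h₁.2, h₂.2, hr⟩⟩
  rcases List.mem_append.mp hy with hy | hy
  · exact h₁.1 y hy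
  · exact h₂.1 y hy

theorem AltW.congr_head {K L : Subgroup M} {x x' : M} {l : List M} (h : AltW K L (x :: l))
    (hK : x' ∈ K ↔ x ∈ K) (hL : x' ∈ L ↔ x ∈ L) : AltW K L (x' :: l) := by
  refine AltW.cons' ?_ h.tail ?_
  · rcases h.1 x (List.mem_cons_self) with ⟨h1, h2⟩ | ⟨h1, h2⟩
    · exact Or.inl ⟨hK.mpr h1, fun hc => h2 (hL.mp hc)⟩
    · exact Or.inr ⟨hL.mpr h1, fun hc => h2 (hK.mp hc)⟩
  · intro y hy
    have := List.isChain_cons.mp h.2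
    have hr := this.1 y hy
    exact ⟨hK.trans hr.1, hL.trans hr.2⟩

def rinv (l : List M) : List M := (l.map fun x => x⁻¹).reverse

theorem rinv_prod (l : List M) : (rinv l).prod = l.prod⁻¹ :=
  (List.prod_inv_reverse l).symm

theorem rinv_ne_nil {l : List M} (h : l ≠ []) : rinv l ≠ [] := by
  simp [rinv, h]

theorem rinv_getLast? (x : M) (l : List M) : (rinv (x :: l)).getLast? = some x⁻¹ := by
  simp [rinv, List.getLast?_reverse]

theorem AltW.rinv {K L : Subgroup M} {l : List M} (h : AltW K L l) : AltW K L (rinv l) := by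
  constructor
  · intro x hx
    simp only [CFUaux.rinv, List.mem_reverse, List.mem_map] at hx
    obtain ⟨y, hy, rfl⟩ := hx
    rcases h.1 y hy with ⟨h1, h2⟩ | ⟨h1, h2⟩
    · exact Or.inl ⟨inv_mem h1, fun hc => h2 (inv_mem_iff.mp hc)⟩
    · exact Or.inr ⟨inv_mem h1, fun hc => h2 (inv_mem_iff.mp hc)⟩
  · rw [CFUaux.rinv, List.Chain', List.isChain_reverse, List.isChain_map]
    refine h.2.imp fun a b hr => ?_
    constructor
    · show b⁻¹ ∈ K ↔ a⁻¹ ∈ L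
      rw [inv_mem_iff, inv_mem_iff]
      exact hr.2.symm
    · show b⁻¹ ∈ L ↔ a⁻¹ ∈ K
      rw [inv_mem_iff, inv_mem_iff]
      exact hr.1.symm

theorem altW_isCanonical {K L : Subgroup M} {l : List M} (h : AltW K L l) (hne : l ≠ []) :
    IsCanonicalForm K L l := by
  constructor
  · intro x hx
    rcases h.1 x hx with ⟨h1, _⟩ | ⟨h1, _⟩
    · exact Or.inl h1
    · exact Or.inr h1
  · rcases Nat.lt_or_ge l.length 2 with h2 | h2
    · left
      have := List.length_pos_iff.mpr hne
      omega
    · right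
      refine ⟨by omega, fun x hx hc => ?_, fun i hi => ?_⟩
      · rcases h.1 x hx with ⟨_, h2⟩ | ⟨_, h2⟩
        · exact h2 hc.2
        · exact h2 hc.1
      · have hr := List.isChain_iff_getElem.mp h.2 i (by omega)
        rw [List.getD_eq_getElem _ _ (by omega : i < l.length), List.getD_eq_getElem _ _ hi]
        exact hr.1

theorem canon_altW {K L : Subgroup M} {l : List M} (h : IsCanonicalForm K L l)
    (hl : 2 ≤ l.length) : AltW K L l := by
  obtain ⟨hmem, hcases⟩ := h
  rcases hcases with h1 | ⟨_, hnot, halt⟩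
  · omega
  have hexc : ∀ x ∈ l, (x ∈ K ∧ x ∉ L) ∨ (x ∈ L ∧ x ∉ K) := by
    intro x hx
    rcases hmem x hx with hK | hL
    · exact Or.inl ⟨hK, fun hc => hnot x hx ⟨hK, hc⟩⟩
    · exact Or.inr ⟨hL, fun hc => hnot x hx ⟨hc, hL⟩⟩
  refine ⟨hexc, List.isChain_iff_getElem.mpr fun i hi => ?_⟩
  have hi' : i + 1 < l.length := by omega
  have h1 := halt i hi'
  rw [List.getD_eq_getElem _ _ (by omega : i < l.length), List.getD_eq_getElem _ _ hi'] at h1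
  have e1 := hexc _ (List.getElem_mem (by omega : i < l.length))
  have e2 := hexc _ (List.getElem_mem hi')
  constructor
  · exact h1
  · tauto

theorem prod_notK : ∀ (n : ℕ) (K L : Subgroup M) (l : List M), l.length ≤ n →
    (∀ w : List M, AltW K L w → w ≠ [] → w.prod ≠ 1) →
    AltW K L l → 2 ≤ l.length → l.prod ∉ K := by
  intro n
  induction n with
  | zero => intro K L l h _ _ hl; omega
  | succ n IHn =>
    intro K L l hln hbad h hl hg
    obtain ⟨g₀, t, rfl⟩ := List.exists_cons_of_ne_nil
      (List.length_pos_iff.mp (by omega) : l ≠ [])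
    have ht : t ≠ [] := by
      intro hc; rw [hc] at hl; simp at hl
    obtain ⟨c, t', rfl⟩ := List.exists_cons_of_ne_nil ht
    have hrel : Rel K L g₀ c := (List.isChain_cons_cons.mp h.2).1
    have hprod : (g₀ :: c :: t').prod = g₀ * (c :: t').prod := List.prod_cons
    have hP : (c :: t').prod = g₀⁻¹ * (g₀ :: c :: t').prod := by
      rw [hprod]; group
    rcases h.1 g₀ (List.mem_cons_self) with ⟨hK, hnL⟩ | ⟨hL, hnK⟩
    · by_cases hh : (g₀ :: c :: t').prod⁻¹ * g₀ ∈ L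
      · -- tail product is in K ⊓ L
        have htp : (c :: t').prod = ((g₀ :: c :: t').prod⁻¹ * g₀)⁻¹ := by
          rw [mul_inv_rev, inv_inv, hP]
        have hKt : (c :: t').prod ∈ K := by
          rw [htp]; exact inv_mem (mul_mem (inv_mem hg) hK)
        have hLt : (c :: t').prod ∈ L := by rw [htp]; exact inv_mem hh
        rcases Nat.lt_or_ge (c :: t').length 2 with h2 | h2
        · have ht' : t' = [] := List.length_eq_zero_iff.mp (by simp only [List.length_cons] at h2; omega)
          subst ht'
          simp only [List.prod_cons, List.prod_nil, mul_one] at hKt hLt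
          rcases h.1 c (by simp) with ⟨_, h2'⟩ | ⟨_, h2'⟩
          · exact h2' hLt
          · exact h2' hKt
        · exact IHn K L (c :: t') (by simp at hln ⊢; omega) hbad h.tail h2 hKt
      · refine hbad (((g₀ :: c :: t').prod⁻¹ * g₀) :: c :: t') ?_ (by simp) ?_
        · refine h.congr_head ?_ ?_
          · exact iff_of_true (mul_mem (inv_mem hg) hK) hK
          · exact iff_of_false hh hnL
        · rw [List.prod_cons, hP]
          group
    · by_cases hgL : (g₀ :: c :: t').prod ∈ L
      · refine hbad (((g₀ :: c :: t').prod⁻¹ * g₀) :: c :: t') ?_ (by simp) ?_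
        · refine h.congr_head ?_ ?_
          · refine iff_of_false (fun hc' => hnK ?_) hnK
            have := mul_mem hg hc'
            rwa [mul_inv_cancel_left] at this
          · exact iff_of_true (mul_mem (inv_mem hgL) hL) hL
        · rw [List.prod_cons, hP]
          group
      · refine hbad ((g₀ :: c :: t').prod⁻¹ :: g₀ :: c :: t') ?_ (by simp) ?_
        · refine h.cons' ?_ ?_
          · exact Or.inl ⟨inv_mem hg, fun hc' => hgL (inv_mem_iff.mp hc')⟩
          · intro y hy
            simp only [List.head?_cons, Option.mem_def, Option.some.injEq] at hy
            subst hy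
            exact ⟨iff_of_true (inv_mem hg) hL,
              iff_of_false (fun hc' => hgL (inv_mem_iff.mp hc')) hnK⟩
        · rw [List.prod_cons]
          group

def Concl (K L : Subgroup M) (l₁ l₂ : List M) : Prop :=
  l₁.length = l₂.length ∧
    ∃ hs : ℕ → M, hs 0 = 1 ∧ hs l₁.length = 1 ∧ (∀ i ≤ l₁.length, hs i ∈ K ⊓ L) ∧
      ∀ i < l₁.length, l₂.getD i 1 = (hs i)⁻¹ * l₁.getD i 1 * hs (i + 1)

theorem Concl.swap {K L : Subgroup M} {l₁ l₂ : List M} (h : Concl L K l₁ l₂) :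
    Concl K L l₁ l₂ := by
  obtain ⟨h1, hs, ha, hb, hc, hd⟩ := h
  refine ⟨h1, hs, ha, hb, fun i hi => ?_, hd⟩
  have := hc i hi
  rw [Subgroup.mem_inf] at this ⊢
  exact this.symm

theorem sameSideStep (K L : Subgroup M)
    (hbad : ∀ w : List M, AltW K L w → w ≠ [] → w.prod ≠ 1)
    (N : ℕ)
    (IH : ∀ (K' L' : Subgroup M), (∀ w : List M, AltW K' L' w → w ≠ [] → w.prod ≠ 1) →
      ∀ l₁ l₂ : List M, l₁.length + l₂.length ≤ N → AltW K' L' l₁ → AltW K' L' l₂ →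
      l₁ ≠ [] → l₂ ≠ [] → l₁.prod = l₂.prod → Concl K' L' l₁ l₂)
    (a b : M) (t₁ t₂ : List M) (ht₁ : t₁ ≠ []) (ht₂ : t₂ ≠ [])
    (h₁ : AltW K L (a :: t₁)) (h₂ : AltW K L (b :: t₂))
    (hlen : (a :: t₁).length + (b :: t₂).length ≤ N + 1)
    (haK : a ∈ K) (haL : a ∉ L) (hbK : b ∈ K) (hbL : b ∉ L)
    (heq : (a :: t₁).prod = (b :: t₂).prod) : Concl K L (a :: t₁) (b :: t₂) := by
  obtain ⟨d, t₁', rfl⟩ := List.exists_cons_of_ne_nil ht₁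
  obtain ⟨c, t₂', rfl⟩ := List.exists_cons_of_ne_nil ht₂
  have hrel₁ : Rel K L a d := (List.isChain_cons_cons.mp h₁.2).1
  have hrel₂ : Rel K L b c := (List.isChain_cons_cons.mp h₂.2).1
  have hdL : d ∈ L := hrel₁.1.mp haK
  have hdK : d ∉ K := fun hc => haL (hrel₁.2.mpr hc)
  have hcL : c ∈ L := hrel₂.1.mp hbK
  have hcK : c ∉ K := fun hc => hbL (hrel₂.2.mpr hc)
  have hprods : (d :: t₁').prod = (a⁻¹ * b) * (c :: t₂').prod := by
    have h' := heq
    simp only [List.prod_cons] at h'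
    simp only [List.prod_cons]
    rw [mul_assoc, ← h']
    group
  have hhK : a⁻¹ * b ∈ K := mul_mem (inv_mem haK) hbK
  have hhL : a⁻¹ * b ∈ L := by
    by_contra hhL
    refine hbad (rinv (c :: t₂') ++ ((a⁻¹ * b)⁻¹ :: d :: t₁')) ?_ (by simp) ?_
    · refine AltW.append (h₂.tail.rinv) ?_ ?_
      · refine AltW.congr_head h₁ ?_ ?_
        · exact iff_of_true (inv_mem hhK) haK
        · exact iff_of_false (fun hc => hhL (inv_mem_iff.mp hc)) haL
      · intro x hx y hy
        rw [rinv_getLast?] at hx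
        simp only [Option.mem_def, Option.some.injEq, List.head?_cons] at hx hy
        subst hx; subst hy
        refine ⟨iff_of_false (fun hc => hcK (inv_mem_iff.mp hc))
          (fun hc => hhL (inv_mem_iff.mp hc)), iff_of_true (inv_mem hcL) (inv_mem hhK)⟩
    · have expand : (((a⁻¹ * b)⁻¹) :: d :: t₁').prod = (a⁻¹ * b)⁻¹ * (d :: t₁').prod :=
        List.prod_cons
      rw [List.prod_append, rinv_prod, expand, hprods]
      group
  have hl₂' : AltW K L (((a⁻¹ * b) * c) :: t₂') :=
    AltW.congr_head h₂.tail (mul_mem_cancel_left hhK) (mul_mem_cancel_left hhL)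
  have key := IH K L hbad (d :: t₁') (((a⁻¹ * b) * c) :: t₂')
      (by simp at hlen ⊢; omega) h₁.tail hl₂' (by simp) (by simp)
      (by rw [hprods]; simp only [List.prod_cons]; group)
  obtain ⟨klen, hs', hs'0, hs'n, hs'mem, hs'rel⟩ := key
  have hlen12 : (a :: d :: t₁').length = (b :: c :: t₂').length := by
    simp only [List.length_cons] at klen ⊢; omega
  refine ⟨hlen12,
    (fun i => match i with | 0 => 1 | 1 => a⁻¹ * b | (j+2) => hs' (j+1)),
    rfl, ?_, ?_, ?_⟩
  · show hs' (t₁'.length + 1) = 1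
    simpa using hs'n
  · intro i hi
    match i with
    | 0 => exact one_mem _
    | 1 => exact Subgroup.mem_inf.mpr ⟨hhK, hhL⟩
    | (j+2) =>
      refine hs'mem (j+1) ?_
      simp only [List.length_cons] at hi ⊢
      omega
  · intro i hi
    simp only [List.length_cons] at hi
    match i with
    | 0 =>
      show (b :: c :: t₂').getD 0 1 = (1:M)⁻¹ * (a :: d :: t₁').getD 0 1 * (a⁻¹ * b)
      simp only [List.getD_cons_zero]
      group
    | 1 =>
      have h0 := hs'rel 0 (by simp)
      rw [List.getD_cons_zero, List.getD_cons_zero, hs'0, inv_one, one_mul] at h0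
      show (b :: c :: t₂').getD 1 1 = (a⁻¹ * b)⁻¹ * (a :: d :: t₁').getD 1 1 * hs' 1
      simp only [List.getD_cons_succ, List.getD_cons_zero]
      rw [mul_assoc, ← h0]
      group
    | (j+2) =>
      have hj := hs'rel (j+1) (by simp only [List.length_cons]; omega)
      simp only [List.getD_cons_succ] at hj ⊢
      exact hj

theorem main_aux : ∀ N : ℕ, ∀ K L : Subgroup M,
    (∀ w : List M, AltW K L w → w ≠ [] → w.prod ≠ 1) →
    ∀ l₁ l₂ : List M, l₁.length + l₂.length ≤ N → AltW K L l₁ → AltW K L l₂ →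
    l₁ ≠ [] → l₂ ≠ [] → l₁.prod = l₂.prod → Concl K L l₁ l₂ := by
  intro N
  induction N with
  | zero =>
    intro K L _ l₁ l₂ hlen _ _ hne1 _ _
    have := List.length_pos_iff.mpr hne1
    omega
  | succ N IH =>
    intro K L hbad l₁ l₂ hlen h1 h2 hne1 hne2 heq
    obtain ⟨a, t₁, rfl⟩ := List.exists_cons_of_ne_nil hne1
    obtain ⟨b, t₂, rfl⟩ := List.exists_cons_of_ne_nil hne2
    by_cases ht₁ : t₁ = []
    · subst ht₁
      by_cases ht₂ : t₂ = []
      · subst ht₂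
        have hab : a = b := by simpa using heq
        subst hab
        exact ⟨rfl, fun _ => 1, rfl, rfl, fun i _ => one_mem _,
          fun i hi => by
            simp only [List.length_cons, List.length_nil] at hi
            have hi0 : i = 0 := by omega
            subst hi0
            simp⟩
      · exfalso
        have hlen2 : 2 ≤ (b :: t₂).length := by
          have := List.length_pos_iff.mpr ht₂
          simp only [List.length_cons]; omega
        have hpa : (b :: t₂).prod = a := by simpa using heq.symm
        rcases h1.1 a (List.mem_cons_self) with ⟨hK, _⟩ | ⟨hL, _⟩
        · exact prod_notK (b :: t₂).length K L (b :: t₂) le_rfl hbad h2 hlen2 (hpa ▸ hK)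
        · exact prod_notK (b :: t₂).length L K (b :: t₂) le_rfl
            (fun w hw => hbad w hw.swap) h2.swap hlen2 (hpa ▸ hL)
    · by_cases ht₂ : t₂ = []
      · subst ht₂
        exfalso
        have hlen2 : 2 ≤ (a :: t₁).length := by
          have := List.length_pos_iff.mpr ht₁
          simp only [List.length_cons]; omega
        have hpa : (a :: t₁).prod = b := by simpa using heq
        rcases h2.1 b (List.mem_cons_self) with ⟨hK, _⟩ | ⟨hL, _⟩
        · exact prod_notK (a :: t₁).length K L (a :: t₁) le_rfl hbad h1 hlen2 (hpa ▸ hK)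
        · exact prod_notK (a :: t₁).length L K (a :: t₁) le_rfl
            (fun w hw => hbad w hw.swap) h1.swap hlen2 (hpa ▸ hL)
      · rcases h1.1 a (List.mem_cons_self) with ⟨haK, haL⟩ | ⟨haL, haK⟩
        · rcases h2.1 b (List.mem_cons_self) with ⟨hbK, hbL⟩ | ⟨hbL, hbK⟩
          · exact sameSideStep K L hbad N IH a b t₁ t₂ ht₁ ht₂ h1 h2 hlen haK haL hbK hbL heq
          · exfalso
            refine hbad (rinv (b :: t₂) ++ (a :: t₁)) ?_ (by simp) ?_
            · refine AltW.append h2.rinv h1 ?_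
              intro x hx y hy
              rw [rinv_getLast?] at hx
              simp only [Option.mem_def, Option.some.injEq, List.head?_cons] at hx hy
              subst hx; subst hy
              refine ⟨iff_of_false (fun hc => hbK (inv_mem_iff.mp hc)) haL,
                iff_of_true (inv_mem hbL) haK⟩
            · rw [List.prod_append, rinv_prod, heq]
              group
        · rcases h2.1 b (List.mem_cons_self) with ⟨hbK, hbL⟩ | ⟨hbL, hbK⟩
          · exfalso
            refine hbad (rinv (a :: t₁) ++ (b :: t₂)) ?_ (by simp) ?_
            · refine AltW.append h1.rinv h2 ?_
              intro x hx y hy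
              rw [rinv_getLast?] at hx
              simp only [Option.mem_def, Option.some.injEq, List.head?_cons] at hx hy
              subst hx; subst hy
              refine ⟨iff_of_false (fun hc => haK (inv_mem_iff.mp hc)) hbL,
                iff_of_true (inv_mem haL) hbK⟩
            · rw [List.prod_append, rinv_prod, ← heq]
              group
          · exact (sameSideStep L K (fun w hw => hbad w hw.swap) N IH a b t₁ t₂ ht₁ ht₂
              h1.swap h2.swap hlen haL haK hbL hbK heq).swap

end CFUaux


/-- Uniqueness of canonical forms in an amalgamated free product: two canonical forms
representing the same element have the same length, and their entries agree up to an
interleaving sequence `h₀ = 1, h₁, …, h_{n-1}, h_n = 1` of elements of `H = K ⊓ L`,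
namely `g**_i = h_i⁻¹ g*_i h_{i+1}` for every `i < n`. -/
theorem canonicalForm_unique {M : Type*} [Group M] (K L : Subgroup M)
    (amalg : IsAmalgam K L) (l₁ l₂ : List M)
    (h₁ : IsCanonicalForm K L l₁) (h₂ : IsCanonicalForm K L l₂)
    (heq : l₁.prod = l₂.prod) :
    l₁.length = l₂.length ∧
      ∃ hs : ℕ → M, hs 0 = 1 ∧ hs l₁.length = 1 ∧ (∀ i ≤ l₁.length, hs i ∈ K ⊓ L) ∧
        ∀ i < l₁.length, l₂.getD i 1 = (hs i)⁻¹ * l₁.getD i 1 * hs (i + 1) := by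
  have hbad : ∀ w : List M, CFUaux.AltW K L w → w ≠ [] → w.prod ≠ 1 := by
    intro w hw hne
    rcases Nat.lt_or_ge w.length 2 with hl | hl
    · have h1 : w.length = 1 := by
        have := List.length_pos_iff.mpr hne
        omega
      obtain ⟨x, rfl⟩ := List.length_eq_one_iff.mp h1
      simp only [List.prod_cons, List.prod_nil, mul_one]
      rcases hw.1 x (List.mem_cons_self) with ⟨_, h2⟩ | ⟨_, h2⟩
      · exact fun hc => h2 (hc ▸ one_mem L)
      · exact fun hc => h2 (hc ▸ one_mem K)
    · exact amalg.2 w (CFUaux.altW_isCanonical hw hne) hl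
  have hpos1 : 0 < l₁.length := by rcases h₁.2 with h | h <;> omega
  have hpos2 : 0 < l₂.length := by rcases h₂.2 with h | h <;> omega
  rcases Nat.lt_or_ge l₁.length 2 with hl1 | hl1
  · rcases Nat.lt_or_ge l₂.length 2 with hl2 | hl2
    · obtain ⟨x, rfl⟩ := List.length_eq_one_iff.mp (by omega : l₁.length = 1)
      obtain ⟨y, rfl⟩ := List.length_eq_one_iff.mp (by omega : l₂.length = 1)
      have hxy : x = y := by simpa using heq
      subst hxy
      refine ⟨rfl, fun _ => 1, rfl, rfl, fun i _ => one_mem _, fun i hi => ?_⟩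
      simp only [List.length_cons, List.length_nil] at hi
      have hi0 : i = 0 := by omega
      subst hi0
      simp
    · exfalso
      obtain ⟨x, rfl⟩ := List.length_eq_one_iff.mp (by omega : l₁.length = 1)
      have hx : l₂.prod = x := by simpa using heq.symm
      have h2' := CFUaux.canon_altW h₂ hl2
      rcases h₁.1 x (List.mem_cons_self) with hK | hL
      · exact CFUaux.prod_notK l₂.length K L l₂ le_rfl hbad h2' hl2 (hx ▸ hK)
      · exact CFUaux.prod_notK l₂.length L K l₂ le_rfl
          (fun w hw => hbad w hw.swap) h2'.swap hl2 (hx ▸ hL)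
  · rcases Nat.lt_or_ge l₂.length 2 with hl2 | hl2
    · exfalso
      obtain ⟨y, rfl⟩ := List.length_eq_one_iff.mp (by omega : l₂.length = 1)
      have hy : l₁.prod = y := by simpa using heq
      have h1' := CFUaux.canon_altW h₁ hl1
      rcases h₂.1 y (List.mem_cons_self) with hK | hL
      · exact CFUaux.prod_notK l₁.length K L l₁ le_rfl hbad h1' hl1 (hy ▸ hK)
      · exact CFUaux.prod_notK l₁.length L K l₁ le_rfl
          (fun w hw => hbad w hw.swap) h1'.swap hl1 (hy ▸ hL)
    · exact CFUaux.main_aux (l₁.length + l₂.length) K L hbad l₁ l₂ le_rfl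
        (CFUaux.canon_altW h₁ hl1) (CFUaux.canon_altW h₂ hl2)
        (List.length_pos_iff.mp hpos1) (List.length_pos_iff.mp hpos2) heq
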